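/- Let λ ∈ ℂ, q(x,t) = c exp(i ρ) with ρ = a x + b t, b = −a² − c² a, r = q*, and s = √(4a² + 16aλ² − 4c²a + 16λ⁴ + 8λ²c² + c⁴). Then the vector function Ψ₁ = ( ((2ia + 4iλ² − ic² + is)/(4λ)) exp( i( ρ/2 − (s/4)x + ((2a + c² − 4λ²)s/8) t ) ), c exp( i( −ρ/2 − (s/4)x + ((2a + c² − 4λ²)s/8) t ) ) ) satisfies the x-part of the Lax pair Φ_x = ( −iλ² + (i/4) q r ) J Φ + λ Q Φ, where J = diag(1,−1) and Q = [[0, q],[−r, 0]]. -/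

import Mathlib

open Complex ComplexConjugate

noncomputable def px (q : ℝ → ℝ → ℂ) : ℝ → ℝ → ℂ :=
  fun x t => deriv (fun x' => q x' t) x

lemma hasDeriv_aux (K u v : ℂ) (x : ℝ) :
    HasDerivAt (fun x' : ℝ => K * Complex.exp (u * x' + v))
      (u * (K * Complex.exp (u * x + v))) x := by
  have h2 : HasDerivAt (fun z : ℂ => u * z + v) u (x:ℂ) := by
    simpa using ((hasDerivAt_id (x:ℂ)).const_mul u).add_const v
  have h3 := ((Complex.hasDerivAt_exp (u * (x:ℂ) + v)).comp (x:ℂ) h2).const_mul K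
  have h4 : HasDerivAt (fun z : ℂ => K * Complex.exp (u * z + v))
      (u * (K * Complex.exp (u * (x:ℂ) + v))) (x:ℂ) := by
    exact h3.congr_deriv (by ring)
  exact h4.comp_ofReal

theorem periodic_seed_eigenfunction_x_part (a b c : ℝ) (lam s : ℂ)
    (hlam : lam ≠ 0)
    (hb : b = -a^2 - c^2 * a)
    (hs : s^2 = 4 * (a:ℂ)^2 + 16 * (a:ℂ) * lam^2 - 4 * (c:ℂ)^2 * (a:ℂ)
      + 16 * lam^4 + 8 * lam^2 * (c:ℂ)^2 + (c:ℂ)^4)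
    (q r f g : ℝ → ℝ → ℂ)
    (hq : ∀ x t, q x t = (c : ℂ) * Complex.exp (Complex.I * ((a:ℂ) * x + (b:ℂ) * t)))
    (hr : ∀ x t, r x t = conj (q x t))
    (hf : ∀ x t, f x t = ((2 * Complex.I * (a:ℂ) + 4 * Complex.I * lam^2
        - Complex.I * (c:ℂ)^2 + Complex.I * s) / (4 * lam)) *
      Complex.exp (Complex.I * (((a:ℂ) * x + (b:ℂ) * t) / 2 - (s / 4) * x
        + ((2 * (a:ℂ) + (c:ℂ)^2 - 4 * lam^2) * s / 8) * t)))
    (hg : ∀ x t, g x t = (c : ℂ) *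
      Complex.exp (Complex.I * (-((a:ℂ) * x + (b:ℂ) * t) / 2 - (s / 4) * x
        + ((2 * (a:ℂ) + (c:ℂ)^2 - 4 * lam^2) * s / 8) * t))) :
    ∀ x t,
      px f x t = (-Complex.I * lam^2 + (Complex.I / 4) * q x t * r x t) * f x t
        + lam * q x t * g x t ∧
      px g x t = -(-Complex.I * lam^2 + (Complex.I / 4) * q x t * r x t) * g x t
        - lam * r x t * f x t := by
  intro x t
  set K : ℂ := (2 * Complex.I * (a:ℂ) + 4 * Complex.I * lam^2
      - Complex.I * (c:ℂ)^2 + Complex.I * s) / (4 * lam) with hKdef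
  set u₁ : ℂ := Complex.I * ((a:ℂ)/2 - s/4) with hu1
  set u₂ : ℂ := Complex.I * (-(a:ℂ)/2 - s/4) with hu2
  set v₁ : ℂ := Complex.I * ((b:ℂ)*t/2 + ((2*(a:ℂ)+(c:ℂ)^2-4*lam^2)*s/8)*t) with hv1
  set v₂ : ℂ := Complex.I * (-(b:ℂ)*t/2 + ((2*(a:ℂ)+(c:ℂ)^2-4*lam^2)*s/8)*t) with hv2
  set B : ℂ := Complex.I * ((a:ℂ)*x + (b:ℂ)*t) with hB
  have hfx : ∀ x' : ℝ, f x' t = K * Complex.exp (u₁ * x' + v₁) := by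
    intro x'
    rw [hf, show Complex.I * (((a:ℂ)*x' + (b:ℂ)*t)/2 - (s/4)*x'
      + ((2*(a:ℂ)+(c:ℂ)^2-4*lam^2)*s/8)*t) = u₁ * x' + v₁ from by rw [hu1, hv1]; ring]
  have hgx : ∀ x' : ℝ, g x' t = (c:ℂ) * Complex.exp (u₂ * x' + v₂) := by
    intro x'
    rw [hg, show Complex.I * (-((a:ℂ)*x' + (b:ℂ)*t)/2 - (s/4)*x'
      + ((2*(a:ℂ)+(c:ℂ)^2-4*lam^2)*s/8)*t) = u₂ * x' + v₂ from by rw [hu2, hv2]; ring]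
  have hpf : px f x t = u₁ * (K * Complex.exp (u₁ * x + v₁)) := by
    have : (fun x' : ℝ => f x' t) = fun x' : ℝ => K * Complex.exp (u₁ * x' + v₁) :=
      funext hfx
    rw [px, this, (hasDeriv_aux K u₁ v₁ x).deriv]
  have hpg : px g x t = u₂ * ((c:ℂ) * Complex.exp (u₂ * x + v₂)) := by
    have : (fun x' : ℝ => g x' t) = fun x' : ℝ => (c:ℂ) * Complex.exp (u₂ * x' + v₂) :=
      funext hgx
    rw [px, this, (hasDeriv_aux (c:ℂ) u₂ v₂ x).deriv]
  have hrx : r x t = (c:ℂ) * Complex.exp (-B) := by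
    rw [hr, hq, map_mul, Complex.conj_ofReal, ← Complex.exp_conj]
    congr 2
    rw [hB]
    simp [map_add, map_mul, Complex.conj_ofReal, Complex.conj_I]
  have e1 : Complex.exp B * Complex.exp (-B) = 1 := by
    rw [← Complex.exp_add]; simp
  have e2 : Complex.exp B * Complex.exp (u₂ * x + v₂) = Complex.exp (u₁ * x + v₁) := by
    rw [← Complex.exp_add]; congr 1; rw [hB, hu1, hu2, hv1, hv2]; ring
  have e3 : Complex.exp (-B) * Complex.exp (u₁ * x + v₁) = Complex.exp (u₂ * x + v₂) := by
    rw [← Complex.exp_add]; congr 1; rw [hB, hu1, hu2, hv1, hv2]; ring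
  have hqr : q x t * r x t = (c:ℂ)^2 := by
    rw [hq, hrx, ← hB]
    linear_combination ((c:ℂ)^2) * e1
  have hqg : q x t * g x t = (c:ℂ)^2 * Complex.exp (u₁ * x + v₁) := by
    rw [hq, hgx, ← hB]
    linear_combination ((c:ℂ)^2) * e2
  have hrf : r x t * f x t = (c:ℂ) * K * Complex.exp (u₂ * x + v₂) := by
    rw [hrx, hfx]
    linear_combination ((c:ℂ) * K) * e3
  have h1 : Complex.I / 4 * q x t * r x t = Complex.I / 4 * (c:ℂ)^2 := by
    rw [mul_assoc, hqr]
  have h2 : lam * q x t * g x t = lam * ((c:ℂ)^2 * Complex.exp (u₁ * x + v₁)) := by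
    rw [mul_assoc, hqg]
  have h3 : lam * r x t * f x t = lam * ((c:ℂ) * K * Complex.exp (u₂ * x + v₂)) := by
    rw [mul_assoc, hrf]
  have h4l : (4:ℂ) * lam ≠ 0 := by
    simp [hlam]
  have hKl : K * (4 * lam) = 2 * Complex.I * (a:ℂ) + 4 * Complex.I * lam^2
      - Complex.I * (c:ℂ)^2 + Complex.I * s := by
    rw [hKdef]; field_simp
  constructor
  · rw [hpf, h1, h2, hfx]
    set E1 : ℂ := Complex.exp (u₁ * x + v₁) with hE1
    rw [hu1]
    apply mul_left_cancel₀ h4l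
    linear_combination ((Complex.I * ((a:ℂ)/2 - s/4) + Complex.I * lam^2
      - Complex.I * (c:ℂ)^2 / 4) * E1) * hKl + (E1 / 4) * hs
      + ((4*lam^2*(a:ℂ) - 2*lam^2*(c:ℂ)^2 + 4*lam^4 - (a:ℂ)*(c:ℂ)^2 + (a:ℂ)^2
          - s^2/4 + (c:ℂ)^4/4) * E1) * Complex.I_sq
  · rw [hpg, h1, h3, hgx]
    set E2 : ℂ := Complex.exp (u₂ * x + v₂) with hE2
    rw [hu2]
    apply mul_left_cancel₀ h4l
    linear_combination (norm := ring_nf) (lam * (c:ℂ) * E2) * hKl
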